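/- arXiv:1412.1975 — 2 statements merged into one kernel-verified Lean document; each statement's English description precedes it below -/
import Mathlib

section
/- Let A be the 2×2 integer matrix with rows (0, −7) and (1, −6), let D := {(i,0) : 0 ≤ i ≤ 6} ⊂ ℤ², and let T = T(A,D) be the unique nonempty compact subset of ℝ² with A·T = T + D. Set w₀ := (0,0) and w_{n+1} := A·w_n + (3,0) for n ≥ 0 (so w_n = Σ_{k=0}^{n−1} A^k (3,0)). Define W₁^(1) := {(0,0),(1,0),(2,0)}, W₂^(1) := {(3,0)}, W₃^(1) := {(4,0),(5,0),(6,0)}, and for n ≥ 1: W₂^(n+1) := {w_{n+1}}; W₁^(n+1) := (A·W₁^(n) + D) ∪ {A·w_n + (d,0) : d ∈ {4,5,6}} if n is odd and (A·W₁^(n) + D) ∪ {A·w_n + (d,0) : d ∈ {0,1,2}} if n is even; W₃^(n+1) := (A·W₃^(n) + D) ∪ {A·w_n + (d,0) : d ∈ {0,1,2}} if n is odd and (A·W₃^(n) + D) ∪ {A·w_n + (d,0) : d ∈ {4,5,6}} if n is even. Then for all n ≥ 1: (a) (T+v) ∩ (T+v') = ∅ for all v ∈ W₁^(n) and v' ∈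 W₃^(n); and (b) {v ∈ W₁^(n) : (T+v) ∩ (T+w_n) ≠ ∅} equals {A·w_{n−1} + (2,0)} if n is odd and {A·w_{n−1} + (4,0)} if n is even, while {v ∈ W₃^(n) : (T+v) ∩ (T+w_n) ≠ ∅} equals {A·w_{n−1} + (4,0)} if n is odd and {A·w_{n−1} + (2,0)} if n is even. -/
open Set Filter Topology Matrix

noncomputable section

/-- A set is the union of two nonempty separated sets. -/
def SepUnion {α : Type*} [TopologicalSpace α] (S : Set α) : Prop :=
  ∃ U V : Set α, S = U ∪ V ∧ U.Nonempty ∧ V.Nonempty ∧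
    closure U ∩ V = ∅ ∧ U ∩ closure V = ∅

/-- `X` is a cut set of `T`: `X ⊆ T` and `T \ X` is disconnected. -/
def IsCutSet {α : Type*} [TopologicalSpace α] (T X : Set α) : Prop :=
  X ⊆ T ∧ SepUnion (T \ X)

/-- `X` is an irreducible cut set of `T`. -/
def IsIrredCutSet {α : Type*} [TopologicalSpace α] (T X : Set α) : Prop :=
  IsCutSet T X ∧ ∀ X₀ : Set α, X₀ ⊂ X → closure X₀ ∩ T ⊆ X₀ → ¬ SepUnion (T \ X₀)

/-- The real matrix obtained from an integer matrix. -/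
def rmat {d : ℕ} (A : Matrix (Fin d) (Fin d) ℤ) : Matrix (Fin d) (Fin d) ℝ :=
  A.map Int.cast

/-- The real vector obtained from an integer vector. -/
def rvec {d : ℕ} (v : Fin d → ℤ) : Fin d → ℝ := fun i => (v i : ℝ)

/-- The translate `T + v` of `T` by a lattice vector `v`. -/
def trT {d : ℕ} (T : Set (Fin d → ℝ)) (v : Fin d → ℤ) : Set (Fin d → ℝ) :=
  (fun x => x + rvec v) '' T

/-- Every complex eigenvalue of `A` has modulus `> 1`. -/
def Expanding {d : ℕ} (A : Matrix (Fin d) (Fin d) ℤ) : Prop :=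
  ∀ μ : ℂ, Module.End.HasEigenvalue (Matrix.toLin' (A.map (Int.cast : ℤ → ℂ))) μ →
    1 < ‖μ‖

/-- `D` is a complete set of coset representatives of `ℤ^d / A ℤ^d`. -/
def ResidueSystem {d : ℕ} (A : Matrix (Fin d) (Fin d) ℤ) (D : Set (Fin d → ℤ)) : Prop :=
  ∀ x : Fin d → ℤ, ∃! e, e ∈ D ∧ ∃ y : Fin d → ℤ, x = A.mulVec y + e

/-- `T` is the attractor `T(A,D)`: nonempty, compact, with `A·T = T + D`. -/
def SelfAffine {d : ℕ} (A : Matrix (Fin d) (Fin d) ℤ) (D : Set (Fin d → ℤ))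
    (T : Set (Fin d → ℝ)) : Prop :=
  T.Nonempty ∧ IsCompact T ∧
    (rmat A).mulVec '' T = ⋃ e ∈ D, (fun x => x + rvec e) '' T

/-- `T = T(A,D)` is a `ℤ^d`-tile: a self-affine attractor for an expanding integer
matrix and a standard digit set, with nonempty interior, tiling `ℝ^d` by `ℤ^d`. -/
def IsZdTile {d : ℕ} (A : Matrix (Fin d) (Fin d) ℤ) (D : Set (Fin d → ℤ))
    (T : Set (Fin d → ℝ)) : Prop :=
  Expanding A ∧ ResidueSystem A D ∧ SelfAffine A D T ∧ (interior T).Nonempty ∧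
    (⋃ v : Fin d → ℤ, trT T v) = univ ∧
    Pairwise fun v₁ v₂ : Fin d → ℤ => interior (trT T v₁) ∩ trT T v₂ = ∅

/-- `V_n = D + A·D + ⋯ + A^{n-1}·D`, the vertex set of the `n`-th Hata graph. -/
def Vset {d : ℕ} (A : Matrix (Fin d) (Fin d) ℤ) (D : Set (Fin d → ℤ)) (n : ℕ) :
    Set (Fin d → ℤ) :=
  {v | ∃ dig : Fin n → (Fin d → ℤ), (∀ k, dig k ∈ D) ∧
    v = ∑ k : Fin n, (A ^ (k : ℕ)).mulVec (dig k)}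

/-- The set of children `C(U) = A·U + D`. -/
def childSet {d : ℕ} (A : Matrix (Fin d) (Fin d) ℤ) (D : Set (Fin d → ℤ))
    (U : Set (Fin d → ℤ)) : Set (Fin d → ℤ) :=
  {w | ∃ u ∈ U, ∃ e ∈ D, w = A.mulVec u + e}

/-- `X_n(W) = ⋃_{v ∈ W} A^{-n}(T + v)`. -/
def XnSet {d : ℕ} (A : Matrix (Fin d) (Fin d) ℤ) (T : Set (Fin d → ℝ)) (n : ℕ)
    (W : Set (Fin d → ℤ)) : Set (Fin d → ℝ) :=
  ⋃ v ∈ W, ((rmat A)⁻¹ ^ n).mulVec '' trT T v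

/-- The subgraph of the `n`-th Hata graph induced on `W` is connected:
any two vertices of `W` are joined by a path inside `W`, consecutive tiles meeting. -/
def HataConn {d : ℕ} (T : Set (Fin d → ℝ)) (W : Set (Fin d → ℤ)) : Prop :=
  ∀ v ∈ W, ∀ w ∈ W,
    Relation.ReflTransGen (fun a b => a ∈ W ∧ b ∈ W ∧ (trT T a ∩ trT T b).Nonempty) v w

/-- The matrix of Example 4.3 (CNS tile, `A = 6`, `B = 7`). -/
def A67 : Matrix (Fin 2) (Fin 2) ℤ := !![0, -7; 1, -6]

/-- The digit set of Example 4.3. -/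
def D67 : Set (Fin 2 → ℤ) := {v | ∃ i : ℤ, 0 ≤ i ∧ i ≤ 6 ∧ v = ![i, 0]}

-- basics
lemma rvec_add (u v : Fin 2 → ℤ) : rvec (u + v) = rvec u + rvec v := by
  funext i; simp [rvec]

lemma rvec_sub (u v : Fin 2 → ℤ) : rvec (u - v) = rvec u - rvec v := by
  funext i; simp [rvec]

lemma rvec_neg (u : Fin 2 → ℤ) : rvec (-u) = -rvec u := by
  funext i; simp [rvec]

lemma A67_mulVec (v : Fin 2 → ℤ) : A67.mulVec v = ![-7 * v 1, v 0 - 6 * v 1] := by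
  funext i
  fin_cases i <;>
    simp [A67, Matrix.mulVec, dotProduct, Fin.sum_univ_two] <;> ring

def Bmat : Matrix (Fin 2) (Fin 2) ℝ := !![-6/7, 1; -1/7, 0]

lemma B_mulVec (v : Fin 2 → ℝ) : Bmat.mulVec v = ![(-6/7) * v 0 + v 1, (-1/7) * v 0] := by
  funext i
  fin_cases i <;>
    simp [Bmat, Matrix.mulVec, dotProduct, Fin.sum_univ_two] <;> ring

lemma rA_mulVec (v : Fin 2 → ℝ) : (rmat A67).mulVec v = ![-7 * v 1, v 0 - 6 * v 1] := by
  funext i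
  fin_cases i <;>
    simp [A67, rmat, Matrix.mulVec, dotProduct, Fin.sum_univ_two] <;> ring

lemma B_rA (v : Fin 2 → ℝ) : Bmat.mulVec ((rmat A67).mulVec v) = v := by
  rw [rA_mulVec, B_mulVec]
  funext i; fin_cases i <;> simp <;> ring

lemma rA_rvec (v : Fin 2 → ℤ) : (rmat A67).mulVec (rvec v) = rvec (A67.mulVec v) := by
  rw [rA_mulVec, A67_mulVec]
  funext i; fin_cases i <;> simp [rvec] <;> push_cast <;> ring

lemma mem_D67 {i : ℤ} (h0 : 0 ≤ i) (h6 : i ≤ 6) : ![i, 0] ∈ D67 := ⟨i, h0, h6, rfl⟩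

-- neighbor relation
def Nbr (T : Set (Fin 2 → ℝ)) (s : Fin 2 → ℤ) : Prop := (T ∩ trT T s).Nonempty

lemma meets_iff (T : Set (Fin 2 → ℝ)) (v v' s : Fin 2 → ℤ) (h : v' = v + s) :
    (trT T v ∩ trT T v').Nonempty ↔ Nbr T s := by
  subst h
  constructor
  · rintro ⟨x, ⟨t, ht, rfl⟩, ⟨t', ht', hx⟩⟩
    have hx' : t' + rvec (v + s) = t + rvec v := hx
    have h2 : t' + rvec s + rvec v = t + rvec v := by
      rw [← hx', rvec_add]; abel
    have h3 : t = t' + rvec s := (add_right_cancel h2).symm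
    exact ⟨t, ht, t', ht', h3.symm⟩
  · rintro ⟨x, hxT, ⟨t, ht, hts⟩⟩
    refine ⟨x + rvec v, ⟨x, hxT, rfl⟩, ⟨t, ht, ?_⟩⟩
    show t + rvec (v + s) = x + rvec v
    have hx : t + rvec s = x := hts
    rw [rvec_add, ← hx]; abel

lemma nbr_symm {T : Set (Fin 2 → ℝ)} {s : Fin 2 → ℤ} (h : Nbr T s) : Nbr T (-s) := by
  obtain ⟨x, hxT, ⟨t, ht, hts⟩⟩ := h
  refine ⟨t, ht, x, hxT, ?_⟩
  show x + rvec (-s) = t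
  have hts' : t + rvec s = x := hts
  rw [rvec_neg, ← hts']; abel

lemma nbr_self {T : Set (Fin 2 → ℝ)} (hT : T.Nonempty) (v : Fin 2 → ℤ) :
    (trT T v ∩ trT T v).Nonempty := by
  obtain ⟨t, ht⟩ := hT
  exact ⟨t + rvec v, ⟨t, ht, rfl⟩, ⟨t, ht, rfl⟩⟩

-- lemmas from self-affinity
variable {T : Set (Fin 2 → ℝ)}

lemma subdiv1 (hself : SelfAffine A67 D67 T) {t : Fin 2 → ℝ} (ht : t ∈ T)
    {i : ℤ} (h0 : 0 ≤ i) (h6 : i ≤ 6) :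
    ∃ u ∈ T, (rmat A67).mulVec u = t + rvec ![i, 0] := by
  have hmem : t + rvec ![i, 0] ∈ ⋃ e ∈ D67, (fun x => x + rvec e) '' T := by
    exact mem_iUnion₂.2 ⟨![i, 0], mem_D67 h0 h6, ⟨t, ht, rfl⟩⟩
  rw [← hself.2.2] at hmem
  obtain ⟨u, hu, huv⟩ := hmem
  exact ⟨u, hu, huv⟩

lemma subdiv2 (hself : SelfAffine A67 D67 T) {t : Fin 2 → ℝ} (ht : t ∈ T) :
    ∃ u ∈ T, ∃ i : ℤ, 0 ≤ i ∧ i ≤ 6 ∧ (rmat A67).mulVec t = u + rvec ![i, 0] := by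
  have hmem : (rmat A67).mulVec t ∈ ⋃ e ∈ D67, (fun x => x + rvec e) '' T := by
    rw [← hself.2.2]; exact ⟨t, ht, rfl⟩
  obtain ⟨e, he, u, hu, huv⟩ := mem_iUnion₂.1 hmem
  obtain ⟨i, h0, h6, rfl⟩ := he
  exact ⟨u, hu, i, h0, h6, huv.symm⟩

lemma child_sub (hself : SelfAffine A67 D67 T) (u : Fin 2 → ℤ) {e : Fin 2 → ℤ}
    (he : e ∈ D67) :
    trT T (A67.mulVec u + e) ⊆ (rmat A67).mulVec '' trT T u := by
  rintro x ⟨t, ht, rfl⟩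
  have h1 : t + rvec e ∈ ⋃ e ∈ D67, (fun x => x + rvec e) '' T :=
    mem_iUnion₂.2 ⟨e, he, ⟨t, ht, rfl⟩⟩
  rw [← hself.2.2] at h1
  obtain ⟨t', ht', ht'e⟩ := h1
  refine ⟨t' + rvec u, ⟨t', ht', rfl⟩, ?_⟩
  show (rmat A67).mulVec (t' + rvec u) = t + rvec (A67.mulVec u + e)
  rw [Matrix.mulVec_add, rA_rvec, rvec_add, ht'e]
  abel

lemma rA_inj {x y : Fin 2 → ℝ} (h : (rmat A67).mulVec x = (rmat A67).mulVec y) : x = y := by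
  have := congrArg Bmat.mulVec h
  rwa [B_rA, B_rA] at this

lemma meets_parent (hself : SelfAffine A67 D67 T) {u u' e e' : Fin 2 → ℤ}
    (he : e ∈ D67) (he' : e' ∈ D67)
    (h : (trT T (A67.mulVec u + e) ∩ trT T (A67.mulVec u' + e')).Nonempty) :
    (trT T u ∩ trT T u').Nonempty := by
  obtain ⟨x, hx1, hx2⟩ := h
  obtain ⟨y, hy, hyx⟩ := child_sub hself u he hx1
  obtain ⟨y', hy', hyx'⟩ := child_sub hself u' he' hx2
  have : y = y' := rA_inj (by rw [hyx, hyx'])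
  exact ⟨y, hy, this ▸ hy'⟩

lemma nbr_step (hself : SelfAffine A67 D67 T) {s : Fin 2 → ℤ} (h : Nbr T s) :
    ∃ j : ℤ, -6 ≤ j ∧ j ≤ 6 ∧ Nbr T ![-7 * s 1 + j, s 0 - 6 * s 1] := by
  obtain ⟨x, hxT, ⟨t', ht', hts⟩⟩ := h
  have hts' : t' + rvec s = x := hts
  obtain ⟨u, hu, i, hi0, hi6, hAi⟩ := subdiv2 hself hxT
  obtain ⟨u', hu', i', hi0', hi6', hAi'⟩ := subdiv2 hself ht'
  refine ⟨i' - i, by omega, by omega, u, hu, u', hu', ?_⟩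
  show u' + rvec ![-7 * s 1 + (i' - i), s 0 - 6 * s 1] = u
  have key : (rmat A67).mulVec x = (rmat A67).mulVec t' + rvec (A67.mulVec s) := by
    rw [← hts', Matrix.mulVec_add, rA_rvec]
  have h2 : u + rvec ![i, 0] = u' + rvec ![i', 0] + rvec (A67.mulVec s) := by
    rw [← hAi, ← hAi', key]
  have h3 : ![-7 * s 1 + (i' - i), s 0 - 6 * s 1] = A67.mulVec s + ![i', 0] - ![i, 0] := by
    rw [A67_mulVec]; funext k; fin_cases k <;> simp <;> ring
  rw [h3, rvec_sub, rvec_add]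
  apply add_right_cancel (b := rvec ![i, 0])
  rw [h2]; abel

-- analytic part
def Kset : Set (Fin 2 → ℝ) :=
  {x | 100 * x 0 - 160 * x 1 ≤ 400 ∧ -631 ≤ 100 * x 0 - 160 * x 1 ∧
       100 * x 0 - 440 * x 1 ≤ 40 ∧ -151 ≤ 100 * x 0 - 440 * x 1}

lemma Kset_closed : IsClosed Kset := by
  have c1 : Continuous fun x : Fin 2 → ℝ => 100 * x 0 - 160 * x 1 := by fun_prop
  have c2 : Continuous fun x : Fin 2 → ℝ => 100 * x 0 - 440 * x 1 := by fun_prop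
  have : Kset = ({x | 100 * x 0 - 160 * x 1 ≤ 400} ∩ {x | -631 ≤ 100 * x 0 - 160 * x 1}) ∩
      ({x | 100 * x 0 - 440 * x 1 ≤ 40} ∩ {x | -151 ≤ 100 * x 0 - 440 * x 1}) := by
    ext x; simp [Kset]; tauto
  rw [this]
  exact ((isClosed_le c1 continuous_const).inter (isClosed_le continuous_const c1)).inter
    ((isClosed_le c2 continuous_const).inter (isClosed_le continuous_const c2))

lemma zero_mem_Kset : (0 : Fin 2 → ℝ) ∈ Kset := by
  refine ⟨?_, ?_, ?_, ?_⟩ <;> norm_num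

lemma K_inv {x : Fin 2 → ℝ} (hx : x ∈ Kset) {r : ℝ} (h0 : 0 ≤ r) (h6 : r ≤ 6) :
    Bmat.mulVec (x + ![r, 0]) ∈ Kset := by
  obtain ⟨k1, k2, k3, k4⟩ := hx
  rw [B_mulVec]
  have e0 : (x + ![r, 0]) 0 = x 0 + r := by simp
  have e1 : (x + ![r, 0]) 1 = x 1 := by simp
  rw [e0, e1]
  refine ⟨?_, ?_, ?_, ?_⟩ <;> simp only [Matrix.cons_val_zero, Matrix.cons_val_one,
    Matrix.head_cons] <;> nlinarith [k1, k2, k3, k4, h0, h6]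

def Nmat : Matrix (Fin 2) (Fin 2) ℝ := !![-132/343, 203/343; -29/343, 42/343]

lemma N_mulVec (v : Fin 2 → ℝ) :
    Nmat.mulVec v = ![(-132/343) * v 0 + (203/343) * v 1, (-29/343) * v 0 + (42/343) * v 1] := by
  funext i
  fin_cases i <;>
    simp [Nmat, Matrix.mulVec, dotProduct, Fin.sum_univ_two]

lemma B3_eq_N (v : Fin 2 → ℝ) :
    Bmat.mulVec (Bmat.mulVec (Bmat.mulVec v)) = Nmat.mulVec v := by
  rw [B_mulVec, B_mulVec, B_mulVec, N_mulVec]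
  funext i; fin_cases i <;> simp <;> ring

lemma decay {v : Fin 2 → ℝ} {C : ℝ} (h0 : |v 0| ≤ C) (h1 : |v 1| ≤ C) :
    |(Nmat.mulVec v) 0| ≤ (335/343) * C ∧ |(Nmat.mulVec v) 1| ≤ (335/343) * C := by
  rw [N_mulVec]
  rw [abs_le] at h0 h1
  constructor <;> simp only [Matrix.cons_val_zero, Matrix.cons_val_one, Matrix.head_cons] <;>
    rw [abs_le] <;> constructor <;> nlinarith [h0.1, h0.2, h1.1, h1.2]

lemma mem_of_approx {S : Set (Fin 2 → ℝ)} (hS : IsClosed S) (p : Fin 2 → ℝ) (C : ℝ)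
    (h : ∀ n : ℕ, ∃ u ∈ S, |u 0 - p 0| ≤ (335/343 : ℝ) ^ n * C ∧
      |u 1 - p 1| ≤ (335/343 : ℝ) ^ n * C) : p ∈ S := by
  rw [← hS.closure_eq]
  rw [Metric.mem_closure_iff]
  intro ε hε
  have htend : Filter.Tendsto (fun n : ℕ => (335/343 : ℝ) ^ n * C) Filter.atTop (nhds 0) := by
    have := tendsto_pow_atTop_nhds_zero_of_lt_one (by norm_num : (0:ℝ) ≤ 335/343)
      (by norm_num : (335/343 : ℝ) < 1)
    simpa using this.mul_const C
  obtain ⟨n, hn⟩ := (htend.eventually (eventually_lt_nhds hε)).exists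
  obtain ⟨u, hu, h0, h1⟩ := h n
  refine ⟨u, hu, ?_⟩
  rw [dist_comm, dist_pi_lt_iff hε]
  intro i
  fin_cases i <;> rw [Real.dist_eq] <;>
    [exact lt_of_le_of_lt h0 hn; exact lt_of_le_of_lt h1 hn]

lemma T_bound (hself : SelfAffine A67 D67 T) :
    ∃ M : ℝ, 0 ≤ M ∧ ∀ t ∈ T, |t 0| ≤ M ∧ |t 1| ≤ M := by
  obtain ⟨C, hC⟩ := hself.2.1.isBounded.exists_norm_le
  refine ⟨max C 0, le_max_right _ _, fun t ht => ?_⟩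
  have h := hC t ht
  constructor <;>
    calc |t _| = ‖t _‖ := (Real.norm_eq_abs _).symm
    _ ≤ ‖t‖ := norm_le_pi_norm t _
    _ ≤ max C 0 := le_trans h (le_max_left _ _)

lemma decay_iter {C : ℝ} (hC : 0 ≤ C) :
    ∀ n : ℕ, ∀ v : Fin 2 → ℝ, |v 0| ≤ C → |v 1| ≤ C →
      |(Nmat ^ n).mulVec v 0| ≤ (335/343 : ℝ) ^ n * C ∧
        |(Nmat ^ n).mulVec v 1| ≤ (335/343 : ℝ) ^ n * C := by
  intro n
  induction n with
  | zero =>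
    intro v h0 h1
    rw [pow_zero, Matrix.one_mulVec]
    simpa using ⟨h0, h1⟩
  | succ n ih =>
    intro v h0 h1
    have hN : (Nmat ^ (n+1)).mulVec v = Nmat.mulVec ((Nmat ^ n).mulVec v) := by
      rw [Matrix.mulVec_mulVec, ← pow_succ']
    obtain ⟨g0, g1⟩ := ih v h0 h1
    have hd := decay g0 g1
    rw [hN, pow_succ']
    constructor
    · calc |Nmat.mulVec ((Nmat ^ n).mulVec v) 0| ≤ 335/343 * ((335/343:ℝ)^n * C) := hd.1
        _ = 335/343 * (335/343:ℝ)^n * C := by ring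
    · calc |Nmat.mulVec ((Nmat ^ n).mulVec v) 1| ≤ 335/343 * ((335/343:ℝ)^n * C) := hd.2
        _ = 335/343 * (335/343:ℝ)^n * C := by ring

lemma Nmat_eq : Bmat ^ 3 = Nmat := by
  have h : ∀ v : Fin 2 → ℝ, (Bmat ^ 3).mulVec v = Nmat.mulVec v := by
    intro v
    have : (Bmat ^ 3).mulVec v = Bmat.mulVec (Bmat.mulVec (Bmat.mulVec v)) := by
      rw [Matrix.mulVec_mulVec, Matrix.mulVec_mulVec]
      congr 1
      rw [pow_succ, pow_succ, pow_one]
    rw [this, B3_eq_N]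
  ext i j
  have := congrFun (h (fun k => if k = j then 1 else 0)) i
  fin_cases i <;> fin_cases j <;>
    simpa [Matrix.mulVec, dotProduct, Fin.sum_univ_two] using this

lemma T_approx (hself : SelfAffine A67 D67 T) :
    ∀ n : ℕ, ∀ t ∈ T, ∃ u ∈ T, ∃ k ∈ Kset, t = k + (Bmat ^ n).mulVec u := by
  intro n
  induction n with
  | zero =>
    intro t ht
    refine ⟨t, ht, 0, zero_mem_Kset, ?_⟩
    rw [pow_zero, Matrix.one_mulVec, zero_add]
  | succ n ih =>
    intro t ht
    obtain ⟨t₁, ht₁, i, hi0, hi6, hAi⟩ := subdiv2 hself ht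
    obtain ⟨u, hu, k, hk, hdec⟩ := ih t₁ ht₁
    refine ⟨u, hu, Bmat.mulVec (k + ![(i:ℝ), 0]), ?_, ?_⟩
    · exact K_inv hk (by exact_mod_cast hi0) (by exact_mod_cast hi6)
    · have hveci : rvec ![i, 0] = ![(i:ℝ), 0] := by
        funext j; fin_cases j <;> simp [rvec]
      have ht' : t = Bmat.mulVec (t₁ + ![(i:ℝ), 0]) := by
        rw [← hveci, ← hAi, B_rA]
      rw [ht', hdec]
      have : k + (Bmat ^ n).mulVec u + ![(i:ℝ), 0] = (k + ![(i:ℝ), 0]) + (Bmat ^ n).mulVec u := by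
        abel
      rw [this, Matrix.mulVec_add, Matrix.mulVec_mulVec, ← pow_succ']

lemma T_sub_K (hself : SelfAffine A67 D67 T) : T ⊆ Kset := by
  obtain ⟨M, hM0, hM⟩ := T_bound hself
  intro t ht
  apply mem_of_approx Kset_closed t M
  intro n
  obtain ⟨u, hu, k, hk, hdec⟩ := T_approx hself (3 * n) t ht
  have hB3n : (Bmat ^ (3 * n)) = Nmat ^ n := by
    rw [pow_mul, Nmat_eq]
  rw [hB3n] at hdec
  obtain ⟨hu0, hu1⟩ := hM u hu
  have hd := decay_iter hM0 n u hu0 hu1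
  refine ⟨k, hk, ?_, ?_⟩
  · have : k 0 - t 0 = -((Nmat ^ n).mulVec u 0) := by
      rw [hdec]; simp
    rw [this, abs_neg]; exact hd.1
  · have : k 1 - t 1 = -((Nmat ^ n).mulVec u 1) := by
      rw [hdec]; simp
    rw [this, abs_neg]; exact hd.2

lemma nbr_bound (hself : SelfAffine A67 D67 T) {s : Fin 2 → ℤ} (h : Nbr T s) :
    -1031 ≤ 100 * s 0 - 160 * s 1 ∧ 100 * s 0 - 160 * s 1 ≤ 1031 ∧
    -191 ≤ 100 * s 0 - 440 * s 1 ∧ 100 * s 0 - 440 * s 1 ≤ 191 := by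
  obtain ⟨x, hxT, ⟨t, ht, hts⟩⟩ := h
  have hts' : t + rvec s = x := hts
  have hx := T_sub_K hself hxT
  have htk := T_sub_K hself ht
  obtain ⟨a1, a2, a3, a4⟩ := hx
  obtain ⟨b1, b2, b3, b4⟩ := htk
  have e0 : x 0 = t 0 + (s 0 : ℝ) := by rw [← hts']; rfl
  have e1 : x 1 = t 1 + (s 1 : ℝ) := by rw [← hts']; rfl
  rw [e0, e1] at a1 a2 a3 a4
  have r1 : (-1031 : ℝ) ≤ 100 * (s 0 : ℝ) - 160 * (s 1 : ℝ) := by linarith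
  have r2 : (100 : ℝ) * (s 0 : ℝ) - 160 * (s 1 : ℝ) ≤ 1031 := by linarith
  have r3 : (-191 : ℝ) ≤ 100 * (s 0 : ℝ) - 440 * (s 1 : ℝ) := by linarith
  have r4 : (100 : ℝ) * (s 0 : ℝ) - 440 * (s 1 : ℝ) ≤ 191 := by linarith
  exact ⟨by exact_mod_cast r1, by exact_mod_cast r2, by exact_mod_cast r3, by exact_mod_cast r4⟩

-- exclusion lemmas
lemma not_nbr_horiz (hself : SelfAffine A67 D67 T) {m : ℤ} (h2 : m ≤ -2 ∨ 2 ≤ m) :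
    ¬ Nbr T ![m, 0] := by
  intro h
  have hb := nbr_bound hself h
  simp only [Matrix.cons_val_zero, Matrix.cons_val_one, Matrix.head_cons] at hb
  omega

lemma not_nbr_up (hself : SelfAffine A67 D67 T) {m : ℤ} (hm : -6 ≤ m) (hm' : m ≤ 3) :
    ¬ Nbr T ![m, 1] := by
  intro h
  have hb := nbr_bound hself h
  simp only [Matrix.cons_val_zero, Matrix.cons_val_one, Matrix.head_cons] at hb
  obtain ⟨j, hj1, hj2, h2⟩ := nbr_step hself h
  simp only [Matrix.cons_val_zero, Matrix.cons_val_one, Matrix.head_cons] at h2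
  have hb2 := nbr_bound hself h2
  simp only [Matrix.cons_val_zero, Matrix.cons_val_one, Matrix.head_cons] at hb2
  obtain ⟨j', hj1', hj2', h3⟩ := nbr_step hself h2
  simp only [Matrix.cons_val_zero, Matrix.cons_val_one, Matrix.head_cons] at h3
  have hb3 := nbr_bound hself h3
  simp only [Matrix.cons_val_zero, Matrix.cons_val_one, Matrix.head_cons] at hb3
  omega

lemma not_nbr_down (hself : SelfAffine A67 D67 T) {m : ℤ} (hm : -3 ≤ m) (hm' : m ≤ 6) :
    ¬ Nbr T ![m, -1] := by
  intro h
  have h2 := nbr_symm h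
  have he : -(![m, -1] : Fin 2 → ℤ) = ![-m, 1] := by
    funext k; fin_cases k <;> simp
  rw [he] at h2
  exact not_nbr_up hself (by omega) (by omega) h2

-- membership of periodic points
lemma f_mem (hself : SelfAffine A67 D67 T) {t : Fin 2 → ℝ} (ht : t ∈ T)
    {i : ℤ} (h0 : 0 ≤ i) (h6 : i ≤ 6) : Bmat.mulVec (t + rvec ![i, 0]) ∈ T := by
  obtain ⟨u, hu, huv⟩ := subdiv1 hself ht h0 h6
  have : Bmat.mulVec (t + rvec ![i, 0]) = u := by
    rw [← huv, B_rA]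
  rwa [this]

lemma periodic_mem (hself : SelfAffine A67 D67 T) (p : Fin 2 → ℝ)
    (hp0 : |p 0| ≤ 3) (hp1 : |p 1| ≤ 3)
    (F : (Fin 2 → ℝ) → (Fin 2 → ℝ))
    (hFT : ∀ t ∈ T, F t ∈ T)
    (hFa : ∀ x, ∀ i, F x i - p i = Nmat.mulVec (fun k => x k - p k) i) : p ∈ T := by
  obtain ⟨M, hM0, hM⟩ := T_bound hself
  apply mem_of_approx hself.2.1.isClosed p (M + 3)
  intro n
  induction n with
  | zero =>
    obtain ⟨t₀, ht₀⟩ := hself.1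
    obtain ⟨g0, g1⟩ := hM t₀ ht₀
    refine ⟨t₀, ht₀, ?_, ?_⟩ <;> rw [pow_zero, one_mul]
    · calc |t₀ 0 - p 0| ≤ |t₀ 0| + |p 0| := abs_sub _ _
        _ ≤ M + 3 := add_le_add g0 hp0
    · calc |t₀ 1 - p 1| ≤ |t₀ 1| + |p 1| := abs_sub _ _
        _ ≤ M + 3 := add_le_add g1 hp1
  | succ n ih =>
    obtain ⟨u, hu, h0, h1⟩ := ih
    refine ⟨F u, hFT u hu, ?_, ?_⟩ <;> rw [pow_succ']
    · rw [hFa u 0]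
      calc |Nmat.mulVec (fun k => u k - p k) 0| ≤ 335/343 * ((335/343:ℝ)^n * (M+3)) :=
            (decay h0 h1).1
        _ = 335/343 * (335/343:ℝ)^n * (M+3) := by ring
    · rw [hFa u 1]
      calc |Nmat.mulVec (fun k => u k - p k) 1| ≤ 335/343 * ((335/343:ℝ)^n * (M+3)) :=
            (decay h0 h1).2
        _ = 335/343 * (335/343:ℝ)^n * (M+3) := by ring

lemma nbr_one (hself : SelfAffine A67 D67 T) : Nbr T ![1, 0] := by
  set p : Fin 2 → ℝ := ![-57/31, -87/217] with hp
  set p' : Fin 2 → ℝ := ![-88/31, -87/217] with hp'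
  have hr6 : rvec ![(6:ℤ), 0] = ![(6:ℝ), 0] := by funext k; fin_cases k <;> simp [rvec]
  have hr0 : rvec ![(0:ℤ), 0] = ![(0:ℝ), 0] := by funext k; fin_cases k <;> simp [rvec]
  have hr1 : rvec ![(1:ℤ), 0] = ![(1:ℝ), 0] := by funext k; fin_cases k <;> simp [rvec]
  have hr5 : rvec ![(5:ℤ), 0] = ![(5:ℝ), 0] := by funext k; fin_cases k <;> simp [rvec]
  have hpT : p ∈ T := by
    apply periodic_mem hself p (by norm_num [hp, abs_le]) (by norm_num [hp, abs_le])
      (fun x => Bmat.mulVec (Bmat.mulVec (Bmat.mulVec (x + ![(6:ℝ), 0]) + ![(0:ℝ), 0]) + ![(0:ℝ), 0]))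
    · intro t ht
      have s1 := f_mem hself ht (by norm_num : (0:ℤ) ≤ 6) (by norm_num)
      rw [hr6] at s1
      have s2 := f_mem hself s1 (le_refl (0:ℤ)) (by norm_num)
      rw [hr0] at s2
      have s3 := f_mem hself s2 (le_refl (0:ℤ)) (by norm_num)
      rwa [hr0] at s3
    · intro x i
      fin_cases i <;>
        simp [hp, B_mulVec, N_mulVec, Matrix.vecHead, Matrix.vecTail, Bmat, Nmat] <;> ring
  have hp'T : p' ∈ T := by
    apply periodic_mem hself p' (by norm_num [hp', abs_le]) (by norm_num [hp', abs_le])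
      (fun x => Bmat.mulVec (Bmat.mulVec (Bmat.mulVec (x + ![(0:ℝ), 0]) + ![(1:ℝ), 0]) + ![(5:ℝ), 0]))
    · intro t ht
      have s1 := f_mem hself ht (le_refl (0:ℤ)) (by norm_num)
      rw [hr0] at s1
      have s2 := f_mem hself s1 (by norm_num : (0:ℤ) ≤ 1) (by norm_num)
      rw [hr1] at s2
      have s3 := f_mem hself s2 (by norm_num : (0:ℤ) ≤ 5) (by norm_num)
      rwa [hr5] at s3
    · intro x i
      fin_cases i <;>
        simp [hp', B_mulVec, N_mulVec, Matrix.vecHead, Matrix.vecTail, Bmat, Nmat] <;> ring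
  refine ⟨p, hpT, p', hp'T, ?_⟩
  show p' + rvec ![1, 0] = p
  rw [hr1]
  funext k; fin_cases k <;> simp [hp, hp'] <;> norm_num

lemma nbr_neg_one (hself : SelfAffine A67 D67 T) : Nbr T ![-1, 0] := by
  have h := nbr_symm (nbr_one hself)
  have he : -(![1, 0] : Fin 2 → ℤ) = ![-1, 0] := by funext k; fin_cases k <;> simp
  rwa [he] at h

-- the key inductive step
lemma key (hself : SelfAffine A67 D67 T) (U₁ U₃ : Set (Fin 2 → ℤ)) (wn u₁ u₃ : Fin 2 → ℤ)
    (hdis : ∀ v ∈ U₁, ∀ v' ∈ U₃, ¬ (trT T v ∩ trT T v').Nonempty)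
    (h1 : {v ∈ U₁ | (trT T v ∩ trT T wn).Nonempty} = {u₁})
    (h3 : {v ∈ U₃ | (trT T v ∩ trT T wn).Nonempty} = {u₃})
    (hu1 : wn = u₁ + ![1, 0]) (hu3 : u₃ = wn + ![1, 0]) :
    (∀ v ∈ childSet A67 D67 U₁ ∪
        {A67.mulVec wn + ![4, 0], A67.mulVec wn + ![5, 0], A67.mulVec wn + ![6, 0]},
      ∀ v' ∈ childSet A67 D67 U₃ ∪
        {A67.mulVec wn + ![0, 0], A67.mulVec wn + ![1, 0], A67.mulVec wn + ![2, 0]},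
      ¬ (trT T v ∩ trT T v').Nonempty) ∧
    {v ∈ childSet A67 D67 U₁ ∪
        {A67.mulVec wn + ![4, 0], A67.mulVec wn + ![5, 0], A67.mulVec wn + ![6, 0]} |
      (trT T v ∩ trT T (A67.mulVec wn + ![3, 0])).Nonempty} = {A67.mulVec wn + ![4, 0]} ∧
    {v ∈ childSet A67 D67 U₃ ∪
        {A67.mulVec wn + ![0, 0], A67.mulVec wn + ![1, 0], A67.mulVec wn + ![2, 0]} |
      (trT T v ∩ trT T (A67.mulVec wn + ![3, 0])).Nonempty} = {A67.mulVec wn + ![2, 0]} := by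
  -- basic consequences
  have hu₁mem : u₁ ∈ U₁ ∧ (trT T u₁ ∩ trT T wn).Nonempty :=
    (Set.ext_iff.mp h1 u₁).mpr rfl
  have hu₃mem : u₃ ∈ U₃ ∧ (trT T u₃ ∩ trT T wn).Nonempty :=
    (Set.ext_iff.mp h3 u₃).mpr rfl
  have h1u : ∀ v ∈ U₁, (trT T v ∩ trT T wn).Nonempty → v = u₁ :=
    fun v hv hm => (Set.ext_iff.mp h1 v).mp ⟨hv, hm⟩
  have h3u : ∀ v ∈ U₃, (trT T v ∩ trT T wn).Nonempty → v = u₃ :=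
    fun v hv hm => (Set.ext_iff.mp h3 v).mp ⟨hv, hm⟩
  -- extras as existential form
  have extras1 : ∀ v ∈ ({A67.mulVec wn + ![4, 0], A67.mulVec wn + ![5, 0],
      A67.mulVec wn + ![6, 0]} : Set (Fin 2 → ℤ)),
      ∃ j : ℤ, 4 ≤ j ∧ j ≤ 6 ∧ v = A67.mulVec wn + ![j, 0] := by
    intro v hv
    simp only [Set.mem_insert_iff, Set.mem_singleton_iff] at hv
    rcases hv with rfl | rfl | rfl
    exacts [⟨4, by norm_num⟩, ⟨5, by norm_num⟩, ⟨6, by norm_num⟩]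
  have extras3 : ∀ v ∈ ({A67.mulVec wn + ![0, 0], A67.mulVec wn + ![1, 0],
      A67.mulVec wn + ![2, 0]} : Set (Fin 2 → ℤ)),
      ∃ j : ℤ, 0 ≤ j ∧ j ≤ 2 ∧ v = A67.mulVec wn + ![j, 0] := by
    intro v hv
    simp only [Set.mem_insert_iff, Set.mem_singleton_iff] at hv
    rcases hv with rfl | rfl | rfl
    exacts [⟨0, by norm_num⟩, ⟨1, by norm_num⟩, ⟨2, by norm_num⟩]
  -- difference identities
  have diffA : ∀ (z : Fin 2 → ℤ) (i j : ℤ),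
      A67.mulVec (z + ![1, 0]) + ![j, 0] = (A67.mulVec z + ![i, 0]) + ![j - i, 1] := by
    intro z i j
    funext k
    simp only [A67_mulVec, Pi.add_apply]
    fin_cases k <;>
      simp [Matrix.vecHead, Matrix.vecTail] <;> ring
  have diffB : ∀ (z : Fin 2 → ℤ) (i j : ℤ),
      A67.mulVec z + ![j, 0] = (A67.mulVec z + ![i, 0]) + ![j - i, 0] := by
    intro z i j
    funext k
    simp only [A67_mulVec, Pi.add_apply]
    fin_cases k <;>
      simp [Matrix.vecHead, Matrix.vecTail] <;> ring
  refine ⟨?_, ?_, ?_⟩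
  · -- disjointness
    rintro v hv v' hv'
    rcases hv with ⟨u, hu, e, he, rfl⟩ | hv
    · rcases hv' with ⟨u', hu', e', he', rfl⟩ | hv'
      · -- child vs child
        intro hm
        exact hdis u hu u' hu' (meets_parent hself he he' hm)
      · -- child vs extras (0,1,2)
        obtain ⟨j, hj0, hj2, rfl⟩ := extras3 _ hv'
        obtain ⟨i, hi0, hi6, rfl⟩ := he
        intro hm
        have hpar := meets_parent hself (mem_D67 hi0 hi6) (mem_D67 hj0 (by omega)) hm
        have huu := h1u u hu hpar
        rw [huu] at hm
        have hveq : A67.mulVec wn + ![j, 0] =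
            (A67.mulVec u₁ + ![i, 0]) + ![j - i, 1] := by
          rw [hu1]; exact diffA u₁ i j
        exact not_nbr_up hself (by omega) (by omega)
          ((meets_iff T _ _ _ hveq).mp hm)
    · rcases hv' with ⟨u', hu', e', he', rfl⟩ | hv'
      · -- extras (4,5,6) vs child
        obtain ⟨j, hj4, hj6, rfl⟩ := extras1 _ hv
        obtain ⟨i, hi0, hi6, rfl⟩ := he'
        intro hm
        have hpar := meets_parent hself (mem_D67 (by omega : (0:ℤ) ≤ j) (by omega)) (mem_D67 hi0 hi6) hm
        have hpar' : (trT T u' ∩ trT T wn).Nonempty := by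
          obtain ⟨x, hx1, hx2⟩ := hpar; exact ⟨x, hx2, hx1⟩
        have huu := h3u u' hu' hpar'
        rw [huu] at hm
        have hveq : A67.mulVec u₃ + ![i, 0] =
            (A67.mulVec wn + ![j, 0]) + ![i - j, 1] := by
          rw [hu3]; exact diffA wn j i
        exact not_nbr_up hself (by omega) (by omega)
          ((meets_iff T _ _ _ hveq).mp hm)
      · -- extras vs extras
        obtain ⟨j, hj4, hj6, rfl⟩ := extras1 _ hv
        obtain ⟨j', hj0, hj2, rfl⟩ := extras3 _ hv'
        intro hm
        exact not_nbr_horiz hself (by omega : j' - j ≤ -2 ∨ 2 ≤ j' - j)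
          ((meets_iff T _ _ _ (diffB wn j j')).mp hm)
  · -- neighbours of w_{n+1} in U₁'
    ext v
    simp only [Set.mem_setOf_eq, Set.mem_singleton_iff]
    constructor
    · rintro ⟨hv, hm⟩
      rcases hv with ⟨u, hu, e, he, rfl⟩ | hv
      · obtain ⟨i, hi0, hi6, rfl⟩ := he
        have hpar := meets_parent hself (mem_D67 hi0 hi6) (mem_D67 (by norm_num : (0:ℤ) ≤ 3) (by norm_num)) hm
        have huu := h1u u hu hpar
        rw [huu] at hm
        have hveq : A67.mulVec wn + ![3, 0] =
            (A67.mulVec u₁ + ![i, 0]) + ![3 - i, 1] := by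
          rw [hu1]; exact diffA u₁ i 3
        exact absurd ((meets_iff T _ _ _ hveq).mp hm)
          (not_nbr_up hself (by omega) (by omega))
      · obtain ⟨j, hj4, hj6, rfl⟩ := extras1 _ hv
        rcases (by omega : j = 4 ∨ j = 5 ∨ j = 6) with rfl | rfl | rfl
        · rfl
        · exact absurd ((meets_iff T _ _ _ (diffB wn 5 3)).mp hm)
            (not_nbr_horiz hself (by norm_num))
        · exact absurd ((meets_iff T _ _ _ (diffB wn 6 3)).mp hm)
            (not_nbr_horiz hself (by norm_num))
    · rintro rfl
      refine ⟨Set.mem_union_right _ (by simp), ?_⟩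
      rw [meets_iff T _ _ ![-1, 0] (diffB wn 4 3)]
      exact nbr_neg_one hself
  · -- neighbours of w_{n+1} in U₃'
    ext v
    simp only [Set.mem_setOf_eq, Set.mem_singleton_iff]
    constructor
    · rintro ⟨hv, hm⟩
      rcases hv with ⟨u, hu, e, he, rfl⟩ | hv
      · obtain ⟨i, hi0, hi6, rfl⟩ := he
        have hpar := meets_parent hself (mem_D67 hi0 hi6) (mem_D67 (by norm_num : (0:ℤ) ≤ 3) (by norm_num)) hm
        have huu := h3u u hu hpar
        rw [huu] at hm
        have hveq : A67.mulVec wn + ![3, 0] =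
            (A67.mulVec u₃ + ![i, 0]) + ![3 - i, -1] := by
          rw [hu3]
          funext k
          simp only [A67_mulVec, Pi.add_apply]
          fin_cases k <;>
            simp [Matrix.vecHead, Matrix.vecTail] <;> ring
        exact absurd ((meets_iff T _ _ _ hveq).mp hm)
          (not_nbr_down hself (by omega) (by omega))
      · obtain ⟨j, hj0, hj2, rfl⟩ := extras3 _ hv
        rcases (by omega : j = 0 ∨ j = 1 ∨ j = 2) with rfl | rfl | rfl
        · exact absurd ((meets_iff T _ _ _ (diffB wn 0 3)).mp hm)
            (not_nbr_horiz hself (by norm_num))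
        · exact absurd ((meets_iff T _ _ _ (diffB wn 1 3)).mp hm)
            (not_nbr_horiz hself (by norm_num))
        · rfl
    · rintro rfl
      refine ⟨Set.mem_union_right _ (by simp), ?_⟩
      rw [meets_iff T _ _ ![1, 0] (diffB wn 2 3)]
      exact nbr_one hself

theorem statement16 (T : Set (Fin 2 → ℝ)) (hself : SelfAffine A67 D67 T)
    (w : ℕ → Fin 2 → ℤ) (hw0 : w 0 = 0)
    (hwrec : ∀ n, w (n + 1) = A67.mulVec (w n) + ![3, 0])
    (W₁ W₂ W₃ : ℕ → Set (Fin 2 → ℤ))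
    (h11 : W₁ 1 = {![0, 0], ![1, 0], ![2, 0]})
    (h21 : W₂ 1 = {![3, 0]})
    (h31 : W₃ 1 = {![4, 0], ![5, 0], ![6, 0]})
    (h2rec : ∀ n, 1 ≤ n → W₂ (n + 1) = {w (n + 1)})
    (h1odd : ∀ n, 1 ≤ n → n % 2 = 1 → W₁ (n + 1) = childSet A67 D67 (W₁ n) ∪
      {A67.mulVec (w n) + ![4, 0], A67.mulVec (w n) + ![5, 0], A67.mulVec (w n) + ![6, 0]})
    (h1even : ∀ n, 1 ≤ n → n % 2 = 0 → W₁ (n + 1) = childSet A67 D67 (W₁ n) ∪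
      {A67.mulVec (w n) + ![0, 0], A67.mulVec (w n) + ![1, 0], A67.mulVec (w n) + ![2, 0]})
    (h3odd : ∀ n, 1 ≤ n → n % 2 = 1 → W₃ (n + 1) = childSet A67 D67 (W₃ n) ∪
      {A67.mulVec (w n) + ![0, 0], A67.mulVec (w n) + ![1, 0], A67.mulVec (w n) + ![2, 0]})
    (h3even : ∀ n, 1 ≤ n → n % 2 = 0 → W₃ (n + 1) = childSet A67 D67 (W₃ n) ∪
      {A67.mulVec (w n) + ![4, 0], A67.mulVec (w n) + ![5, 0], A67.mulVec (w n) + ![6, 0]}) :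
    ∀ n, 1 ≤ n →
      (∀ v ∈ W₁ n, ∀ v' ∈ W₃ n, trT T v ∩ trT T v' = ∅) ∧
      (n % 2 = 1 →
        {v ∈ W₁ n | (trT T v ∩ trT T (w n)).Nonempty} = {A67.mulVec (w (n - 1)) + ![2, 0]} ∧
        {v ∈ W₃ n | (trT T v ∩ trT T (w n)).Nonempty} = {A67.mulVec (w (n - 1)) + ![4, 0]}) ∧
      (n % 2 = 0 →
        {v ∈ W₁ n | (trT T v ∩ trT T (w n)).Nonempty} = {A67.mulVec (w (n - 1)) + ![4, 0]} ∧
        {v ∈ W₃ n | (trT T v ∩ trT T (w n)).Nonempty} = {A67.mulVec (w (n - 1)) + ![2, 0]}) := by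
  have base_pair : ∀ a b : ℤ, (b ≤ a - 2 ∨ a + 2 ≤ b) → trT T ![a, 0] ∩ trT T ![b, 0] = ∅ := by
    intro a b hab
    apply Set.not_nonempty_iff_eq_empty.mp
    intro hm
    have heq : (![b, 0] : Fin 2 → ℤ) = ![a, 0] + ![b - a, 0] := by
      funext k; fin_cases k <;> simp
    exact not_nbr_horiz hself (by omega) ((meets_iff T _ _ _ heq).mp hm)
  have lit_iff : ∀ a b : ℤ, ((trT T ![a, 0] ∩ trT T ![b, 0]).Nonempty ↔ Nbr T ![b - a, 0]) := by
    intro a b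
    apply meets_iff
    funext k; fin_cases k <;> simp
  have hsh : ∀ (z : Fin 2 → ℤ) (a b c : ℤ), a + b = c →
      A67.mulVec z + ![c, 0] = (A67.mulVec z + ![a, 0]) + ![b, 0] := by
    intro z a b c h
    funext k
    simp only [Pi.add_apply]
    fin_cases k <;> simp <;> omega
  intro n hn
  induction n, hn using Nat.le_induction with
  | base =>
    have w1 : w 1 = ![3, 0] := by
      rw [hwrec 0, hw0, Matrix.mulVec_zero, zero_add]
    have e2 : A67.mulVec (w (1 - 1)) + ![2, 0] = ![2, 0] := by
      norm_num [hw0, Matrix.mulVec_zero]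
    have e4 : A67.mulVec (w (1 - 1)) + ![4, 0] = ![4, 0] := by
      norm_num [hw0, Matrix.mulVec_zero]
    refine ⟨?_, ?_, ?_⟩
    · rw [h11, h31]
      intro v hv v' hv'
      simp only [Set.mem_insert_iff, Set.mem_singleton_iff] at hv hv'
      rcases hv with rfl | rfl | rfl <;> rcases hv' with rfl | rfl | rfl <;>
        exact base_pair _ _ (by norm_num)
    · intro _
      rw [h11, w1, e2, e4]
      constructor
      · ext v
        simp only [Set.mem_setOf_eq, Set.mem_insert_iff, Set.mem_singleton_iff]
        constructor
        · rintro ⟨(rfl | rfl | rfl), hm⟩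
          · exact absurd ((lit_iff 0 3).mp hm) (not_nbr_horiz hself (by norm_num))
          · exact absurd ((lit_iff 1 3).mp hm) (not_nbr_horiz hself (by norm_num))
          · rfl
        · rintro rfl
          refine ⟨Or.inr (Or.inr rfl), (lit_iff 2 3).mpr ?_⟩
          have : (3:ℤ) - 2 = 1 := by norm_num
          rw [this]
          exact nbr_one hself
      · rw [h31]
        ext v
        simp only [Set.mem_setOf_eq, Set.mem_insert_iff, Set.mem_singleton_iff]
        constructor
        · rintro ⟨(rfl | rfl | rfl), hm⟩
          · rfl
          · exact absurd ((lit_iff 5 3).mp hm) (not_nbr_horiz hself (by norm_num))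
          · exact absurd ((lit_iff 6 3).mp hm) (not_nbr_horiz hself (by norm_num))
        · rintro rfl
          refine ⟨Or.inl rfl, (lit_iff 4 3).mpr ?_⟩
          have : (3:ℤ) - 4 = -1 := by norm_num
          rw [this]
          exact nbr_neg_one hself
    · intro h; exact absurd h (by norm_num)
  | succ n hn ih =>
    obtain ⟨ihdis, ihodd, iheven⟩ := ih
    have hn1 : n - 1 + 1 = n := by omega
    have hwn : w n = A67.mulVec (w (n - 1)) + ![3, 0] := by
      have := hwrec (n - 1); rwa [hn1] at this
    have hwn1 : w (n + 1) = A67.mulVec (w n) + ![3, 0] := hwrec n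
    have hsub : n + 1 - 1 = n := by omega
    rcases (by omega : n % 2 = 1 ∨ n % 2 = 0) with hpar | hpar
    · -- n odd
      obtain ⟨ih1, ih3⟩ := ihodd hpar
      have hu1 : w n = (A67.mulVec (w (n - 1)) + ![2, 0]) + ![1, 0] := by
        rw [hwn]; exact hsh _ 2 1 3 (by norm_num)
      have hu3 : A67.mulVec (w (n - 1)) + ![4, 0] = w n + ![1, 0] := by
        rw [hwn]; exact hsh _ 3 1 4 (by norm_num)
      have hdis' : ∀ v ∈ W₁ n, ∀ v' ∈ W₃ n, ¬ (trT T v ∩ trT T v').Nonempty :=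
        fun v hv v' hv' => Set.not_nonempty_iff_eq_empty.mpr (ihdis v hv v' hv')
      obtain ⟨k1, k2, k3⟩ := key hself (W₁ n) (W₃ n) (w n) _ _ hdis' ih1 ih3 hu1 hu3
      refine ⟨?_, ?_, ?_⟩
      · rw [h1odd n hn hpar, h3odd n hn hpar]
        intro v hv v' hv'
        exact Set.not_nonempty_iff_eq_empty.mp (k1 v hv v' hv')
      · intro h; exact absurd h (by omega)
      · intro _
        rw [h1odd n hn hpar, h3odd n hn hpar, hwn1, hsub]
        exact ⟨k2, k3⟩
    · -- n even
      obtain ⟨ih1, ih3⟩ := iheven hpar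
      have hu1 : w n = (A67.mulVec (w (n - 1)) + ![2, 0]) + ![1, 0] := by
        rw [hwn]; exact hsh _ 2 1 3 (by norm_num)
      have hu3 : A67.mulVec (w (n - 1)) + ![4, 0] = w n + ![1, 0] := by
        rw [hwn]; exact hsh _ 3 1 4 (by norm_num)
      have hdis' : ∀ v ∈ W₃ n, ∀ v' ∈ W₁ n, ¬ (trT T v ∩ trT T v').Nonempty := by
        intro v hv v' hv'
        have h := ihdis v' hv' v hv
        intro hne
        rw [Set.inter_comm] at hne
        exact Set.not_nonempty_iff_eq_empty.mpr h hne
      obtain ⟨k1, k2, k3⟩ := key hself (W₃ n) (W₁ n) (w n) _ _ hdis' ih3 ih1 hu1 hu3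
      refine ⟨?_, ?_, ?_⟩
      · rw [h1even n hn hpar, h3even n hn hpar]
        intro v hv v' hv'
        have h := k1 v' hv' v hv
        apply Set.not_nonempty_iff_eq_empty.mp
        intro hne
        rw [Set.inter_comm] at hne
        exact h hne
      · intro _
        rw [h1even n hn hpar, h3even n hn hpar, hwn1, hsub]
        exact ⟨k3, k2⟩
      · intro h; exact absurd h (by omega)
end
end

section
/- Let T be a ℤ^d-tile T(A,D), let n₀ ≥ 1, and suppose that for each n ≥ n₀ the set V_n is partitioned into pairwise disjoint nonempty sets V_n = W₁^(n) ∪ W₂^(n) ∪ W₃^(n) satisfying W₁^(n+1) ⊆ C(W₁^(n)) ∪ C(W₂^(n)), W₂^(n+1) ⊆ C(W₂^(n)), and W₃^(n+1) ⊆ C(W₃^(n)) ∪ C(W₂^(n)). Then for all n ≥ n₀ one has C(W₁^(n)) ⊆ W₁^(n+1) and C(W₃^(n)) ⊆ W₃^(n+1); consequently X_n(W₁^(n)) ⊆ X_{n+1}(W₁^(n+1)) and X_n(W₃^(n)) ⊆ X_{n+1}(W₃^(n+1)). -/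
open Set Filter Topology Matrix

noncomputable section

section Aux

variable {d : ℕ}

lemma aux_detA_ne (A : Matrix (Fin d) (Fin d) ℤ) (hA : Expanding A) :
    A.det ≠ 0 := by
  intro h
  have hdet : (A.map (Int.cast : ℤ → ℂ)).det = 0 := by
    have : A.map (Int.cast : ℤ → ℂ) = (Int.castRingHom ℂ).mapMatrix A := rfl
    rw [this, ← RingHom.map_det (Int.castRingHom ℂ) A, h]
    simp
  obtain ⟨v, hv, hmv⟩ := (Matrix.exists_mulVec_eq_zero_iff).2 hdet
  have : Module.End.HasEigenvalue (Matrix.toLin' (A.map (Int.cast : ℤ → ℂ))) 0 :=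
    Module.End.hasEigenvalue_of_hasEigenvector
      ⟨by rw [Module.End.mem_eigenspace_iff, Matrix.toLin'_apply, hmv, zero_smul], hv⟩
  have h0 := hA 0 this
  rw [norm_zero] at h0
  exact absurd h0 (by norm_num)

lemma aux_detR_unit (A : Matrix (Fin d) (Fin d) ℤ) (hA : Expanding A) :
    IsUnit (rmat A).det := by
  have : (rmat A).det = ((A.det : ℤ) : ℝ) := by
    have h : rmat A = (Int.castRingHom ℝ).mapMatrix A := rfl
    rw [h, ← RingHom.map_det (Int.castRingHom ℝ) A]; rfl
  rw [this]
  exact isUnit_iff_ne_zero.2 (by exact_mod_cast aux_detA_ne A hA)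

lemma aux_rvec_mulVec (A : Matrix (Fin d) (Fin d) ℤ) (y : Fin d → ℤ) :
    rvec (A.mulVec y) = (rmat A).mulVec (rvec y) := by
  funext i
  simp [rvec, rmat, Matrix.mulVec, dotProduct, Matrix.map_apply]

lemma aux_rvec_add (a b : Fin d → ℤ) : rvec (a + b) = rvec a + rvec b := by
  funext i; simp [rvec]

lemma aux_mulVec_inj (A : Matrix (Fin d) (Fin d) ℤ) (hA : Expanding A)
    (u u' : Fin d → ℤ) (h : A.mulVec u = A.mulVec u') : u = u' := by
  have h1 : (rmat A).mulVec (rvec u) = (rmat A).mulVec (rvec u') := by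
    rw [← aux_rvec_mulVec, ← aux_rvec_mulVec, h]
  have h2 : rvec u = rvec u' := by
    have := congrArg (fun z => ((rmat A)⁻¹).mulVec z) h1
    simpa [Matrix.mulVec_mulVec, Matrix.nonsing_inv_mul _ (aux_detR_unit A hA)] using this
  funext i
  have := congrFun h2 i
  simp only [rvec] at this
  exact_mod_cast this

lemma aux_child_eq (A : Matrix (Fin d) (Fin d) ℤ) (D : Set (Fin d → ℤ))
    (hA : Expanding A) (hres : ResidueSystem A D)
    {u u' e e' : Fin d → ℤ} (he : e ∈ D) (he' : e' ∈ D)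
    (h : A.mulVec u + e = A.mulVec u' + e') : u = u' ∧ e = e' := by
  obtain ⟨E, _, hEuniq⟩ := hres (A.mulVec u + e)
  have h1 : e = E := hEuniq e ⟨he, u, rfl⟩
  have h2 : e' = E := hEuniq e' ⟨he', u', h⟩
  have hee : e = e' := h1.trans h2.symm
  subst hee
  have : A.mulVec u = A.mulVec u' := by
    have := add_right_cancel h
    exact this
  exact ⟨aux_mulVec_inj A hA u u' this, rfl⟩

lemma aux_child_in_Vset (A : Matrix (Fin d) (Fin d) ℤ) (D : Set (Fin d → ℤ))
    {n : ℕ} {u e : Fin d → ℤ} (hu : u ∈ Vset A D n) (he : e ∈ D) :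
    A.mulVec u + e ∈ Vset A D (n + 1) := by
  obtain ⟨dig, hdig, rfl⟩ := hu
  refine ⟨Fin.cons e dig, ?_, ?_⟩
  · intro k
    refine Fin.cases ?_ ?_ k
    · simpa using he
    · intro j; simpa using hdig j
  · rw [Fin.sum_univ_succ]
    simp only [Fin.cons_succ, Fin.cons_zero, pow_zero, Matrix.one_mulVec, Fin.val_succ,
      Fin.val_zero]
    rw [add_comm]
    congr 1
    have : A.mulVec (∑ k : Fin n, (A ^ (k : ℕ)).mulVec (dig k))
          = ∑ k : Fin n, A.mulVec ((A ^ (k : ℕ)).mulVec (dig k)) := by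
        simp only [← Matrix.mulVecLin_apply]
        exact map_sum (Matrix.mulVecLin A) (fun k : Fin n => (A ^ (k : ℕ)).mulVec (dig k)) Finset.univ
    rw [this]
    refine Finset.sum_congr rfl (fun k _ => ?_)
    rw [Matrix.mulVec_mulVec, ← pow_succ']

lemma aux_Xn_mono (A : Matrix (Fin d) (Fin d) ℤ) (T : Set (Fin d → ℝ)) (n : ℕ)
    {W W' : Set (Fin d → ℤ)} (h : W ⊆ W') : XnSet A T n W ⊆ XnSet A T n W' :=
  Set.biUnion_subset_biUnion_left h

lemma aux_Xn_step (A : Matrix (Fin d) (Fin d) ℤ) (D : Set (Fin d → ℤ))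
    (T : Set (Fin d → ℝ)) (hA : Expanding A) (hsa : SelfAffine A D T)
    (n : ℕ) (W : Set (Fin d → ℤ)) :
    XnSet A T n W ⊆ XnSet A T (n + 1) (childSet A D W) := by
  intro x hx
  simp only [XnSet, Set.mem_iUnion] at hx ⊢
  obtain ⟨v, hv, y, hy, rfl⟩ := hx
  obtain ⟨t, ht, rfl⟩ := hy
  have hBt : (rmat A).mulVec t ∈ ⋃ e ∈ D, (fun x => x + rvec e) '' T := by
    rw [← hsa.2.2]
    exact ⟨t, ht, rfl⟩
  simp only [Set.mem_iUnion] at hBt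
  obtain ⟨e, he, s, hs, heq⟩ := hBt
  refine ⟨A.mulVec v + e, ⟨v, hv, e, he, rfl⟩, s + rvec (A.mulVec v + e), ⟨s, hs, rfl⟩, ?_⟩
  have hMB : (rmat A)⁻¹ * rmat A = 1 := Matrix.nonsing_inv_mul _ (aux_detR_unit A hA)
  have hkey : ((rmat A)⁻¹).mulVec (s + rvec (A.mulVec v + e)) = t + rvec v := by
    rw [aux_rvec_add, aux_rvec_mulVec]
    have : s + ((rmat A).mulVec (rvec v) + rvec e)
        = (rmat A).mulVec t + (rmat A).mulVec (rvec v) := by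
      rw [← heq]; ring
    rw [this, ← Matrix.mulVec_add, Matrix.mulVec_mulVec, hMB, Matrix.one_mulVec]
  rw [pow_succ, ← Matrix.mulVec_mulVec, hkey]

end Aux

theorem statement19 {d : ℕ} (A : Matrix (Fin d) (Fin d) ℤ) (D : Set (Fin d → ℤ))
    (T : Set (Fin d → ℝ)) (htile : IsZdTile A D T)
    (n₀ : ℕ) (hn₀ : 1 ≤ n₀) (W₁ W₂ W₃ : ℕ → Set (Fin d → ℤ))
    (hpart : ∀ n, n₀ ≤ n → W₁ n ∪ W₂ n ∪ W₃ n = Vset A D n)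
    (hd12 : ∀ n, n₀ ≤ n → Disjoint (W₁ n) (W₂ n))
    (hd13 : ∀ n, n₀ ≤ n → Disjoint (W₁ n) (W₃ n))
    (hd23 : ∀ n, n₀ ≤ n → Disjoint (W₂ n) (W₃ n))
    (hne1 : ∀ n, n₀ ≤ n → (W₁ n).Nonempty)
    (hne2 : ∀ n, n₀ ≤ n → (W₂ n).Nonempty)
    (hne3 : ∀ n, n₀ ≤ n → (W₃ n).Nonempty)
    (hc1 : ∀ n, n₀ ≤ n → W₁ (n + 1) ⊆ childSet A D (W₁ n) ∪ childSet A D (W₂ n))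
    (hc2 : ∀ n, n₀ ≤ n → W₂ (n + 1) ⊆ childSet A D (W₂ n))
    (hc3 : ∀ n, n₀ ≤ n → W₃ (n + 1) ⊆ childSet A D (W₃ n) ∪ childSet A D (W₂ n)) :
    ∀ n, n₀ ≤ n →
      childSet A D (W₁ n) ⊆ W₁ (n + 1) ∧ childSet A D (W₃ n) ⊆ W₃ (n + 1) ∧
      XnSet A T n (W₁ n) ⊆ XnSet A T (n + 1) (W₁ (n + 1)) ∧
      XnSet A T n (W₃ n) ⊆ XnSet A T (n + 1) (W₃ (n + 1)) := by
  intro n hn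
  have hA : Expanding A := htile.1
  have hres : ResidueSystem A D := htile.2.1
  have hsa : SelfAffine A D T := htile.2.2.1
  have hsub : ∀ m, n₀ ≤ m → W₁ m ⊆ Vset A D m ∧ W₂ m ⊆ Vset A D m ∧ W₃ m ⊆ Vset A D m := by
    intro m hm
    rw [← hpart m hm]
    exact ⟨fun u hu => Or.inl (Or.inl hu), fun u hu => Or.inl (Or.inr hu),
      fun u hu => Or.inr hu⟩
  have h1 : childSet A D (W₁ n) ⊆ W₁ (n + 1) := by
    rintro w ⟨u, hu, e, he, rfl⟩
    have hwV : A.mulVec u + e ∈ Vset A D (n + 1) :=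
      aux_child_in_Vset A D ((hsub n hn).1 hu) he
    rw [← hpart (n + 1) (le_trans hn (Nat.le_succ n))] at hwV
    rcases hwV with (hw | hw) | hw
    · exact hw
    · exfalso
      obtain ⟨u', hu', e', he', heq⟩ := hc2 n hn hw
      obtain ⟨huu, -⟩ := aux_child_eq A D hA hres he he' heq
      exact Set.disjoint_left.mp (hd12 n hn) hu (huu ▸ hu')
    · exfalso
      rcases hc3 n hn hw with ⟨u', hu', e', he', heq⟩ | ⟨u', hu', e', he', heq⟩
      · obtain ⟨huu, -⟩ := aux_child_eq A D hA hres he he' heq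
        exact Set.disjoint_left.mp (hd13 n hn) hu (huu ▸ hu')
      · obtain ⟨huu, -⟩ := aux_child_eq A D hA hres he he' heq
        exact Set.disjoint_left.mp (hd12 n hn) hu (huu ▸ hu')
  have h3 : childSet A D (W₃ n) ⊆ W₃ (n + 1) := by
    rintro w ⟨u, hu, e, he, rfl⟩
    have hwV : A.mulVec u + e ∈ Vset A D (n + 1) :=
      aux_child_in_Vset A D ((hsub n hn).2.2 hu) he
    rw [← hpart (n + 1) (le_trans hn (Nat.le_succ n))] at hwV
    rcases hwV with (hw | hw) | hw
    · exfalso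
      rcases hc1 n hn hw with ⟨u', hu', e', he', heq⟩ | ⟨u', hu', e', he', heq⟩
      · obtain ⟨huu, -⟩ := aux_child_eq A D hA hres he he' heq
        exact Set.disjoint_left.mp (hd13 n hn) hu' (huu ▸ hu)
      · obtain ⟨huu, -⟩ := aux_child_eq A D hA hres he he' heq
        exact Set.disjoint_left.mp (hd23 n hn) hu' (huu ▸ hu)
    · exfalso
      obtain ⟨u', hu', e', he', heq⟩ := hc2 n hn hw
      obtain ⟨huu, -⟩ := aux_child_eq A D hA hres he he' heq
      exact Set.disjoint_left.mp (hd23 n hn) hu' (huu ▸ hu)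
    · exact hw
  exact ⟨h1, h3,
    (aux_Xn_step A D T hA hsa n (W₁ n)).trans (aux_Xn_mono A T (n + 1) h1),
    (aux_Xn_step A D T hA hsa n (W₃ n)).trans (aux_Xn_mono A T (n + 1) h3)⟩
end
end
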